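/- Let G = (V,E) be a finite simple graph with n nodes, fix α ≥ 1, d ≥ 0, ε ∈ (0,1), and L = 2 + ⌈log_{1+ε} n⌉. Let (Z_1, …, Z_L) be an (α, d, L)-decomposition of G. If d > 2(1+ε)·d*, where d* = max_{∅≠S⊆V} |E(S)|/|S|, then Z_L = ∅. -/

import Mathlib

open Finset
open scoped Classical

variable {V : Type*} [Fintype V] [DecidableEq V]

/-- Degree of `v` within the node set `S`: number of neighbors of `v` inside `S`. -/
noncomputable def degIn (G : SimpleGraph V) (v : V) (S : Finset V) : ℕ :=
  (S.filter fun u => G.Adj v u).card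

/-- The set of edges of `G` with both endpoints in `S`. -/
noncomputable def edgesIn (G : SimpleGraph V) (S : Finset V) : Finset (Sym2 V) :=
  G.edgeFinset.filter fun e => ∀ v ∈ e, v ∈ S

/-- Density of the subgraph induced by `S`: `|E(S)|/|S|`. -/
noncomputable def density (G : SimpleGraph V) (S : Finset V) : ℝ :=
  (edgesIn G S).card / S.card


private def indG (G : SimpleGraph V) (S : Finset V) : SimpleGraph V where
  Adj a b := a ∈ S ∧ b ∈ S ∧ G.Adj a b
  symm := ⟨fun a b h => ⟨h.2.1, h.1, h.2.2.symm⟩⟩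
  loopless := ⟨fun a h => G.loopless.irrefl a h.2.2⟩

lemma indG_degree (G : SimpleGraph V) (S : Finset V) (v : V) (hv : v ∈ S) :
    (indG G S).degree v = degIn G v S := by
  rw [← SimpleGraph.card_neighborFinset_eq_degree]
  unfold degIn
  congr 1
  ext u
  rw [SimpleGraph.mem_neighborFinset]
  simp [SimpleGraph.mem_neighborFinset, indG, hv, and_comm]

lemma indG_degree_zero (G : SimpleGraph V) (S : Finset V) (v : V) (hv : v ∉ S) :
    (indG G S).degree v = 0 := by
  rw [← SimpleGraph.card_neighborFinset_eq_degree, Finset.card_eq_zero]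
  ext u
  rw [SimpleGraph.mem_neighborFinset]
  simp [SimpleGraph.mem_neighborFinset, indG, hv]

lemma indG_edgeFinset (G : SimpleGraph V) (S : Finset V) :
    (indG G S).edgeFinset = edgesIn G S := by
  ext e
  induction e using Sym2.ind with
  | _ a b =>
    simp only [SimpleGraph.mem_edgeFinset, edgesIn, Finset.mem_filter,
      SimpleGraph.mem_edgeSet, Sym2.mem_iff]
    constructor
    · rintro ⟨ha, hb, h⟩
      exact ⟨h, fun v hv => by rcases hv with rfl | rfl <;> assumption⟩
    · rintro ⟨h, hm⟩
      exact ⟨hm a (Or.inl rfl), hm b (Or.inr rfl), h⟩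

lemma sum_degIn (G : SimpleGraph V) (S : Finset V) :
    ∑ v ∈ S, degIn G v S = 2 * (edgesIn G S).card := by
  rw [← indG_edgeFinset, ← SimpleGraph.sum_degrees_eq_twice_card_edges]
  rw [← Finset.sum_subset (Finset.subset_univ S)
    (fun v _ hv => indG_degree_zero G S v hv)]
  exact Finset.sum_congr rfl fun v hv => (indG_degree G S v hv).symm

/-- An `(α, d, L)`-decomposition of `G`: a chain `V = Z 1 ⊇ Z 2 ⊇ ⋯ ⊇ Z L` such that
every node of `Z i` with degree `> α d` inside `Z i` is included in `Z (i+1)`, and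
no node of `Z i` with degree `< d` inside `Z i` belongs to `Z (i+1)`. -/
def IsDecomp (G : SimpleGraph V) (α d : ℝ) (L : ℕ) (Z : ℕ → Finset V) : Prop :=
  Z 1 = Finset.univ ∧
  (∀ i, 1 ≤ i → i < L → Z (i + 1) ⊆ Z i) ∧
  (∀ i, 1 ≤ i → i < L → ∀ v ∈ Z i, α * d < (degIn G v (Z i) : ℝ) → v ∈ Z (i + 1)) ∧
  (∀ i, 1 ≤ i → i < L → ∀ v ∈ Z i, (degIn G v (Z i) : ℝ) < d → v ∉ Z (i + 1))

/-- If `d > 2(1+ε)·d*`, then the topmost level of an `(α,d,L)`-decomposition is empty. -/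
theorem decomp_top_level_empty (G : SimpleGraph V) (α d ε : ℝ)
    (hα : 1 ≤ α) (hd : 0 ≤ d) (hε0 : 0 < ε) (hε1 : ε < 1) (L : ℕ)
    (hL : (L : ℤ) = 2 + ⌈Real.logb (1 + ε) (Fintype.card V)⌉)
    (Z : ℕ → Finset V) (hZ : IsDecomp G α d L Z) (dstar : ℝ)
    (hds : IsGreatest {x : ℝ | ∃ S : Finset V, S.Nonempty ∧ x = density G S} dstar)
    (hbig : 2 * (1 + ε) * dstar < d) :
    Z L = ∅ := by
  by_contra hne'
  have hne : (Z L).Nonempty := Finset.nonempty_iff_ne_empty.mpr hne'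
  obtain ⟨hZ1, hsub, _, hlow⟩ := hZ
  -- V is nonempty
  have hVpos : 0 < Fintype.card V := by
    rcases hne with ⟨v, _⟩
    exact Fintype.card_pos_iff.mpr ⟨v⟩
  set n : ℕ := Fintype.card V with hn
  -- dstar ≥ 0
  have hds0 : 0 ≤ dstar := by
    obtain ⟨S, hS, rfl⟩ := hds.1
    unfold density
    positivity
  -- L = 2 + m with m ≥ logb
  have hlog0 : (0:ℝ) ≤ Real.logb (1 + ε) n := by
    apply Real.logb_nonneg (by linarith)
    exact_mod_cast hVpos
  have hceil0 : 0 ≤ ⌈Real.logb (1 + ε) (n:ℝ)⌉ := Int.ceil_nonneg hlog0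
  obtain ⟨m, hm⟩ : ∃ m : ℕ, (m : ℤ) = ⌈Real.logb (1 + ε) (n:ℝ)⌉ :=
    ⟨(⌈Real.logb (1 + ε) (n:ℝ)⌉).toNat, Int.toNat_of_nonneg hceil0⟩
  have hLm : L = 2 + m := by omega
  -- (m : ℝ) ≥ logb
  have hmlog : Real.logb (1 + ε) n ≤ (m : ℝ) := by
    have := Int.le_ceil (Real.logb (1 + ε) (n:ℝ))
    rw [← hm] at this
    exact_mod_cast this
  -- edges bound
  have hedge : ∀ S : Finset V, ((edgesIn G S).card : ℝ) ≤ dstar * S.card := by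
    intro S
    rcases S.eq_empty_or_nonempty with rfl | hS
    · have : edgesIn G (∅ : Finset V) = ∅ := by
        ext e
        induction e using Sym2.ind with
        | _ a b =>
          simp only [edgesIn, Finset.mem_filter, Finset.notMem_empty, iff_false, not_and]
          intro _ h
          exact h a (Sym2.mem_mk_left a b)
      simp [this]
    · have h1 : density G S ≤ dstar := hds.2 ⟨S, hS, rfl⟩
      have hc : (0:ℝ) < S.card := by exact_mod_cast hS.card_pos
      unfold density at h1
      rw [div_le_iff₀ hc] at h1
      linarith
  -- step inequality: d * |Z (i+1)| ≤ 2 dstar * |Z i|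
  have hstep : ∀ i, 1 ≤ i → i < L →
      d * ((Z (i+1)).card : ℝ) ≤ 2 * dstar * ((Z i).card : ℝ) := by
    intro i h1 h2
    have hdeg : ∀ v ∈ Z (i+1), d ≤ (degIn G v (Z i) : ℝ) := by
      intro v hv
      by_contra hc
      exact hlow i h1 h2 v (hsub i h1 h2 hv) (not_le.mp hc) hv
    have hsum : d * ((Z (i+1)).card : ℝ) ≤ ∑ v ∈ Z (i+1), (degIn G v (Z i) : ℝ) := by
      rw [mul_comm]
      calc ((Z (i+1)).card : ℝ) * d = ∑ _v ∈ Z (i+1), d := by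
            rw [Finset.sum_const, nsmul_eq_mul]
        _ ≤ _ := Finset.sum_le_sum hdeg
    have hsum2 : ∑ v ∈ Z (i+1), (degIn G v (Z i) : ℝ) ≤
        ∑ v ∈ Z i, (degIn G v (Z i) : ℝ) :=
      Finset.sum_le_sum_of_subset_of_nonneg (hsub i h1 h2)
        (fun v _ _ => by positivity)
    have hhand : ∑ v ∈ Z i, (degIn G v (Z i) : ℝ) = 2 * ((edgesIn G (Z i)).card : ℝ) := by
      exact_mod_cast congrArg (Nat.cast : ℕ → ℝ) (sum_degIn G (Z i))
    have := hedge (Z i)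
    calc d * ((Z (i+1)).card : ℝ) ≤ ∑ v ∈ Z i, (degIn G v (Z i) : ℝ) :=
          le_trans hsum hsum2
      _ = 2 * ((edgesIn G (Z i)).card : ℝ) := hhand
      _ ≤ 2 * (dstar * (Z i).card) := by linarith
      _ = 2 * dstar * ((Z i).card : ℝ) := by ring
  -- dstar > 0 (else Z 2 = ∅, contradicting Z L nonempty)
  have hL2 : 2 ≤ L := by omega
  have hchain : ∀ j, 1 ≤ j → ∀ t, j + t ≤ L → Z (j + t) ⊆ Z j := by
    intro j hj t
    induction t with
    | zero => intro _; exact fun v hv => hv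
    | succ t ih =>
      intro ht
      have h1 : Z (j + t + 1) ⊆ Z (j + t) :=
        hsub (j + t) (by omega) (by omega)
      have := ih (by omega)
      intro v hv
      exact this (h1 (by rwa [show j + (t+1) = j + t + 1 by omega] at hv))
  -- dstar > 0
  have hds' : 0 < dstar := by
    rcases lt_or_eq_of_le hds0 with h | h
    · exact h
    · exfalso
      have hd0 : 0 < d := by rw [← h] at hbig; linarith
      have h2 : d * ((Z 2).card : ℝ) ≤ 0 := by
        have := hstep 1 le_rfl (by omega)
        rw [← h] at this
        simpa using this
      have hZ2 : (Z 2).card = 0 := by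
        by_contra hc
        have : (0:ℝ) < ((Z 2).card : ℝ) := by
          exact_mod_cast Nat.pos_of_ne_zero hc
        nlinarith
      have : Z L ⊆ Z 2 := by
        have := hchain 2 (by omega) (L - 2) (by omega)
        rwa [show 2 + (L - 2) = L by omega] at this
      rcases hne with ⟨v, hv⟩
      have := this hv
      rw [Finset.card_eq_zero] at hZ2
      simp [hZ2] at this
  -- refined step
  have hstep2 : ∀ i, 1 ≤ i → i < L →
      (1 + ε) * ((Z (i+1)).card : ℝ) ≤ ((Z i).card : ℝ) := by
    intro i h1 h2
    have h := hstep i h1 h2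
    have hz' : (0:ℝ) ≤ ((Z (i+1)).card : ℝ) := by positivity
    nlinarith [mul_nonneg (le_of_lt (sub_pos.mpr hbig)) hz']
  -- main induction
  have hmain : ∀ k, 1 + k ≤ L → (1 + ε)^k * ((Z (1+k)).card : ℝ) ≤ (n : ℝ) := by
    intro k
    induction k with
    | zero =>
      intro _
      simp [hZ1, hn]
    | succ k ih =>
      intro hk
      have ihk := ih (by omega)
      have hs := hstep2 (1+k) (by omega) (by omega)
      have hpow : (0:ℝ) ≤ (1+ε)^k := by positivity
      calc (1+ε)^(k+1) * ((Z (1+(k+1))).card : ℝ)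
          = (1+ε)^k * ((1+ε) * ((Z (1+k+1)).card : ℝ)) := by ring_nf
        _ ≤ (1+ε)^k * ((Z (1+k)).card : ℝ) := by
            exact mul_le_mul_of_nonneg_left hs hpow
        _ ≤ (n : ℝ) := ihk
  -- conclude
  have hfin : (1+ε)^(m+1) * ((Z L).card : ℝ) ≤ (n : ℝ) := by
    have := hmain (m+1) (by omega)
    rwa [show 1 + (m+1) = L by omega] at this
  have hcard1 : (1:ℝ) ≤ ((Z L).card : ℝ) := by
    exact_mod_cast hne.card_pos
  have hppos : (0:ℝ) < (1+ε)^(m+1) := by positivity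
  have hle : (1+ε)^(m+1) ≤ (n : ℝ) := by nlinarith
  -- but (1+ε)^m ≥ n
  have hb1 : (1:ℝ) < 1 + ε := by linarith
  have hrp : (n : ℝ) ≤ (1+ε)^(m:ℕ) := by
    have h1 : (1+ε) ^ (Real.logb (1+ε) (n:ℝ)) ≤ (1+ε) ^ ((m:ℕ):ℝ) :=
      (Real.rpow_le_rpow_left_iff hb1).mpr hmlog
    rw [Real.rpow_logb (by linarith) (by linarith) (by exact_mod_cast hVpos)] at h1
    rwa [Real.rpow_natCast] at h1
  have hgt : (n : ℝ) < (1+ε)^(m+1) := by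
    have : (1+ε)^(m+1) = (1+ε) * (1+ε)^m := by ring
    rw [this]
    have hn1 : (1:ℝ) ≤ (n:ℝ) := by exact_mod_cast hVpos
    nlinarith
  linarith
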